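/- Let R(t) = c·t^k·∏_{i=1}^{ℓ}(t − λ_i)² with c > 0 and λ_i > 0, normalized so that ∫_0^∞ R(t)·exp(−2t) dt = 1. If Q₁, Q₂ are real polynomials nonnegative on [0,∞) with ∫_0^∞ Q_j(t)·exp(−2t) dt = 1 and R = (Q₁ + Q₂)/2, then Q₁ = Q₂ = R. -/

import Mathlib

open Polynomial Finset MeasureTheory Filter

private lemma le_at_of_le_off (f g : ℝ → ℝ) (hf : Continuous f) (hg : Continuous g) (x : ℝ)
    (hx : 0 ≤ x) (h : ∀ t, 0 ≤ t → t ≠ x → f t ≤ g t) : f x ≤ g x := by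
  have hle : ∀ᶠ t in nhdsWithin x (Set.Ioi x), f t ≤ g t := by
    filter_upwards [self_mem_nhdsWithin] with t ht
    exact h t (le_of_lt (lt_of_le_of_lt hx ht)) (ne_of_gt ht)
  exact le_of_tendsto_of_tendsto ((hf.tendsto x).mono_left nhdsWithin_le_nhds)
    ((hg.tendsto x).mono_left nhdsWithin_le_nhds) hle

private lemma peelX (E G : Polynomial ℝ) (h : ∀ t, 0 ≤ t → |E.eval t| ≤ t * G.eval t) :
    ∃ E', E = X * E' ∧ ∀ t, 0 ≤ t → |E'.eval t| ≤ G.eval t := by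
  have h0 : E.eval 0 = 0 := by
    have h1 := h 0 le_rfl
    simp only [zero_mul] at h1
    exact abs_eq_zero.mp (le_antisymm h1 (abs_nonneg _))
  obtain ⟨E', hE'⟩ : X ∣ E := X_dvd_iff.mpr (by rw [coeff_zero_eq_eval_zero]; exact h0)
  refine ⟨E', hE', ?_⟩
  have key : ∀ t, 0 ≤ t → t ≠ 0 → |E'.eval t| ≤ G.eval t := by
    intro t ht hne
    have htpos : 0 < t := lt_of_le_of_ne ht (Ne.symm hne)
    have h2 := h t ht
    rw [hE', eval_mul, eval_X, abs_mul, abs_of_pos htpos] at h2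
    exact le_of_mul_le_mul_left h2 htpos
  intro t ht
  rcases eq_or_ne t 0 with rfl | hne
  · exact le_at_of_le_off _ _ (continuous_abs.comp E'.continuous) G.continuous 0 le_rfl key
  · exact key t ht hne

private lemma peelSq (x : ℝ) (hx : 0 ≤ x) (E G : Polynomial ℝ)
    (h : ∀ t, 0 ≤ t → |E.eval t| ≤ (t - x) ^ 2 * G.eval t) :
    ∃ E', E = (X - C x) ^ 2 * E' ∧ ∀ t, 0 ≤ t → |E'.eval t| ≤ G.eval t := by
  have hroot : E.IsRoot x := by
    have h1 := h x hx
    simp only [sub_self, ne_eq, OfNat.ofNat_ne_zero, not_false_eq_true, zero_pow, zero_mul] at h1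
    exact abs_eq_zero.mp (le_antisymm h1 (abs_nonneg _))
  obtain ⟨E1, hE1⟩ := dvd_iff_isRoot.mpr hroot
  have h1 : ∀ t, 0 ≤ t → |E1.eval t| ≤ |t - x| * G.eval t := by
    have key : ∀ t, 0 ≤ t → t ≠ x → |E1.eval t| ≤ |t - x| * G.eval t := by
      intro t ht hne
      have habs : 0 < |t - x| := abs_pos.mpr (sub_ne_zero.mpr hne)
      have h2 := h t ht
      rw [hE1, eval_mul, eval_sub, eval_X, eval_C, abs_mul] at h2
      have h3 : |t - x| * |E1.eval t| ≤ |t - x| * (|t - x| * G.eval t) := by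
        calc |t - x| * |E1.eval t| ≤ (t - x) ^ 2 * G.eval t := h2
        _ = |t - x| * (|t - x| * G.eval t) := by rw [← sq_abs]; ring
      exact le_of_mul_le_mul_left h3 habs
    intro t ht
    rcases eq_or_ne t x with rfl | hne
    · exact le_at_of_le_off _ _ (continuous_abs.comp E1.continuous)
        (((continuous_id.sub continuous_const).abs.mul G.continuous)) t ht key
    · exact key t ht hne
  have hroot1 : E1.IsRoot x := by
    have h2 := h1 x hx
    simp only [sub_self, abs_zero, zero_mul] at h2
    exact abs_eq_zero.mp (le_antisymm h2 (abs_nonneg _))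
  obtain ⟨E', hE'⟩ := dvd_iff_isRoot.mpr hroot1
  refine ⟨E', by rw [hE1, hE']; ring, ?_⟩
  have key : ∀ t, 0 ≤ t → t ≠ x → |E'.eval t| ≤ G.eval t := by
    intro t ht hne
    have habs : 0 < |t - x| := abs_pos.mpr (sub_ne_zero.mpr hne)
    have h2 := h1 t ht
    rw [hE', eval_mul, eval_sub, eval_X, eval_C, abs_mul] at h2
    exact le_of_mul_le_mul_left h2 habs
  intro t ht
  rcases eq_or_ne t x with rfl | hne
  · exact le_at_of_le_off _ _ (continuous_abs.comp E'.continuous) G.continuous t ht key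
  · exact key t ht hne

private lemma peelXpow : ∀ (k : ℕ) (E G : Polynomial ℝ),
    (∀ t, 0 ≤ t → |E.eval t| ≤ t ^ k * G.eval t) →
    ∃ E', E = X ^ k * E' ∧ ∀ t, 0 ≤ t → |E'.eval t| ≤ G.eval t := by
  intro k
  induction k with
  | zero => exact fun E G h => ⟨E, by simp, fun t ht => by simpa using h t ht⟩
  | succ k ih =>
    intro E G h
    obtain ⟨E1, hE1, h1⟩ := peelX E (X ^ k * G) (fun t ht => by
      have := h t ht
      rw [eval_mul, eval_pow, eval_X]
      calc |E.eval t| ≤ t ^ (k + 1) * G.eval t := this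
      _ = t * (t ^ k * G.eval t) := by ring)
    obtain ⟨E', hE', h'⟩ := ih E1 G (fun t ht => by
      have := h1 t ht
      rwa [eval_mul, eval_pow, eval_X] at this)
    exact ⟨E', by rw [hE1, hE']; ring, h'⟩

private lemma evalProdList (l : List ℝ) (t : ℝ) :
    ((l.map (fun y => ((X : Polynomial ℝ) - C y) ^ 2)).prod).eval t
      = (l.map (fun y => (t - y) ^ 2)).prod := by
  rw [eval_list_prod, List.map_map]
  congr 1
  ext y
  simp [Function.comp]

private lemma peelList : ∀ (l : List ℝ), (∀ x ∈ l, 0 ≤ x) → ∀ E G : Polynomial ℝ,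
    (∀ t, 0 ≤ t → |E.eval t| ≤ (l.map (fun y => (t - y) ^ 2)).prod * G.eval t) →
    ∃ E', E = (l.map (fun y => ((X : Polynomial ℝ) - C y) ^ 2)).prod * E' ∧
      ∀ t, 0 ≤ t → |E'.eval t| ≤ G.eval t := by
  intro l
  induction l with
  | nil => exact fun _ E G h => ⟨E, by simp, fun t ht => by simpa using h t ht⟩
  | cons x l ih =>
    intro hl E G h
    obtain ⟨E1, hE1, h1⟩ := peelSq x (hl x List.mem_cons_self)
      E ((l.map (fun y => ((X : Polynomial ℝ) - C y) ^ 2)).prod * G) (fun t ht => by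
        have := h t ht
        rw [eval_mul, evalProdList]
        calc |E.eval t| ≤ ((x :: l).map (fun y => (t - y) ^ 2)).prod * G.eval t := this
        _ = (t - x) ^ 2 * ((l.map (fun y => (t - y) ^ 2)).prod * G.eval t) := by
            rw [List.map_cons, List.prod_cons]; ring)
    obtain ⟨E', hE', h'⟩ := ih (fun y hy => hl y (List.mem_cons_of_mem x hy)) E1 G
      (fun t ht => by
        have := h1 t ht
        rwa [eval_mul, evalProdList] at this)
    refine ⟨E', ?_, h'⟩
    rw [hE1, hE', List.map_cons, List.prod_cons]
    ring

private lemma bounded_eq_C (p : Polynomial ℝ) (c : ℝ) (h : ∀ t, 0 ≤ t → |p.eval t| ≤ c) :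
    ∃ a, p = C a := by
  by_contra hne
  push_neg at hne
  have hdeg : 0 < p.degree := by
    rcases Nat.eq_zero_or_pos p.natDegree with h0 | h0
    · obtain ⟨a, ha⟩ := Polynomial.natDegree_eq_zero.mp h0
      exact absurd ha.symm (hne a)
    · exact Polynomial.natDegree_pos_iff_degree_pos.mp h0
  have htend := p.abs_tendsto_atTop hdeg
  obtain ⟨t, ht1, ht2⟩ := ((eventually_ge_atTop (0 : ℝ)).and
    (htend.eventually_gt_atTop c)).exists
  exact absurd (h t ht1) (not_le.mpr ht2)

theorem extreme_nonneg_poly_halfline (c : ℝ) (hc : 0 < c) (k ℓ : ℕ)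
    (lam : Fin ℓ → ℝ) (hlam : ∀ i, 0 < lam i)
    (R : Polynomial ℝ) (hR : R = C c * X ^ k * ∏ i : Fin ℓ, (X - C (lam i)) ^ 2)
    (hRnorm : ∫ t in Set.Ioi (0 : ℝ), R.eval t * Real.exp (-2 * t) = 1)
    (Q₁ Q₂ : Polynomial ℝ)
    (hQ₁pos : ∀ t : ℝ, 0 ≤ t → 0 ≤ Q₁.eval t)
    (hQ₂pos : ∀ t : ℝ, 0 ≤ t → 0 ≤ Q₂.eval t)
    (hQ₁norm : ∫ t in Set.Ioi (0 : ℝ), Q₁.eval t * Real.exp (-2 * t) = 1)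
    (hQ₂norm : ∫ t in Set.Ioi (0 : ℝ), Q₂.eval t * Real.exp (-2 * t) = 1)
    (hmix : R = (1/2 : ℝ) • (Q₁ + Q₂)) :
    Q₁ = R ∧ Q₂ = R := by
  -- Q₂ = 2R - Q₁
  have hmix' : R = C (1/2 : ℝ) * (Q₁ + Q₂) := by rw [hmix, smul_eq_C_mul]
  have h2C : (2 : Polynomial ℝ) * C (1/2 : ℝ) = 1 := by
    rw [show ((2 : Polynomial ℝ) = C (2 : ℝ)) from (map_ofNat C 2).symm, ← C_mul]
    norm_num
  have hQ₂eq : Q₂ = 2 * R - Q₁ := by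
    rw [hmix', ← mul_assoc, h2C, one_mul]
    ring
  -- eval formula for R
  have hReval : ∀ t : ℝ, R.eval t = c * (t ^ k * ∏ i : Fin ℓ, (t - lam i) ^ 2) := by
    intro t
    rw [hR]
    simp [eval_prod, mul_assoc]
  -- bound |Q₁ - R| ≤ R on [0,∞)
  set E : Polynomial ℝ := Q₁ - R with hEdef
  have hEbound : ∀ t, 0 ≤ t → |E.eval t| ≤ R.eval t := by
    intro t ht
    have h1 := hQ₁pos t ht
    have h2 := hQ₂pos t ht
    rw [hQ₂eq] at h2
    simp only [eval_sub, eval_mul, eval_ofNat] at h2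
    rw [abs_le]
    constructor
    · simp only [hEdef, eval_sub]; linarith
    · simp only [hEdef, eval_sub]; linarith
  -- peel X^k
  set lp : List ℝ := List.ofFn lam with hlp
  have hlistprod : ∀ t : ℝ, (lp.map (fun y => (t - y) ^ 2)).prod
      = ∏ i : Fin ℓ, (t - lam i) ^ 2 := by
    intro t
    rw [hlp, List.map_ofFn, List.prod_ofFn]
    rfl
  obtain ⟨E1, hE1, h1⟩ := peelXpow k E
      ((lp.map (fun y => ((X : Polynomial ℝ) - C y) ^ 2)).prod * C c) (fun t ht => by
    have := hEbound t ht
    rw [hReval t] at this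
    rw [eval_mul, evalProdList, eval_C, hlistprod]
    calc |E.eval t| ≤ c * (t ^ k * ∏ i : Fin ℓ, (t - lam i) ^ 2) := this
    _ = t ^ k * ((∏ i : Fin ℓ, (t - lam i) ^ 2) * c) := by ring)
  obtain ⟨E2, hE2, h2⟩ := peelList lp (fun y hy => by
      rw [hlp, List.mem_ofFn] at hy
      obtain ⟨i, rfl⟩ := hy
      exact (hlam i).le) E1 (C c) (fun t ht => by
    have := h1 t ht
    rwa [eval_mul, evalProdList] at this)
  simp only [eval_C] at h2
  obtain ⟨a, ha⟩ := bounded_eq_C E2 c h2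
  -- so E = a • P where P = X^k * ∏ (X - λᵢ)²
  have hprodpoly : (lp.map (fun y => ((X : Polynomial ℝ) - C y) ^ 2)).prod
      = ∏ i : Fin ℓ, ((X : Polynomial ℝ) - C (lam i)) ^ 2 := by
    rw [hlp, List.map_ofFn, List.prod_ofFn]
    rfl
  have hEform : E = C a * (X ^ k * ∏ i : Fin ℓ, ((X : Polynomial ℝ) - C (lam i)) ^ 2) := by
    rw [hE1, hE2, ha, hprodpoly]; ring
  -- evaluate Q₁ = R + E
  have hQ₁eval : ∀ t : ℝ, Q₁.eval t = ((c + a) / c) * R.eval t := by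
    intro t
    have : Q₁.eval t = R.eval t + E.eval t := by simp [hEdef]
    rw [this, hEform, hReval t]
    simp only [eval_mul, eval_C, eval_pow, eval_X, eval_prod, eval_sub]
    field_simp
  -- integral forces a = 0
  have hint : (1 : ℝ) = (c + a) / c := by
    have : ∫ t in Set.Ioi (0 : ℝ), Q₁.eval t * Real.exp (-2 * t)
        = ((c + a) / c) * ∫ t in Set.Ioi (0 : ℝ), R.eval t * Real.exp (-2 * t) := by
      rw [← MeasureTheory.integral_const_mul]
      congr 1
      funext t
      rw [hQ₁eval t]
      ring
    rw [hQ₁norm, hRnorm, mul_one] at this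
    exact this
  have ha0 : a = 0 := by
    field_simp at hint
    linarith
  have hE0 : E = 0 := by rw [hEform, ha0]; simp
  have hQ₁R : Q₁ = R := sub_eq_zero.mp hE0
  refine ⟨hQ₁R, ?_⟩
  rw [hQ₂eq, hQ₁R]
  ring
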